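/- If a partial allocation is ε̂-EFM and each agent j in an addable set S receives a piece C_j from an ε'-EF division of a cake C' satisfying u_i(C') ≤ ε̂ for all i ∈ N \ S, then the resulting allocation is (ε̂+ε')-EFM. -/

import Mathlib

def util {N G : Type*} (v : N → G → ℝ) (w : N → Set ℝ → ℝ) (i : N)
    (Mi : Finset G) (Ci : Set ℝ) : ℝ :=
  (∑ g ∈ Mi, v i g) + w i Ci

/-- ε-envy-freeness for mixed goods: EF1 (not relaxed) toward bundles of only
indivisible goods; EF up to ε toward bundles containing cake. -/
def EpsEFM {N G : Type*} [DecidableEq G] (ε : ℝ) (v : N → G → ℝ)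
    (w : N → Set ℝ → ℝ) (Mf : N → Finset G) (Cf : N → Set ℝ) : Prop :=
  ∀ i j : N,
    (Cf j = ∅ → (Mf j = ∅ ∨ ∃ g ∈ Mf j,
      util v w i (Mf i) (Cf i) ≥ util v w i ((Mf j).erase g) (Cf j))) ∧
    (Cf j ≠ ∅ → util v w i (Mf i) (Cf i) ≥ util v w i (Mf j) (Cf j) - ε)

/-- If an ε̂-EFM partial allocation is augmented by an ε'-EF division of a piece of
cake `C'` among an addable set `S`, where every agent outside `S` values `C'` at
most ε̂, the result is (ε̂ + ε')-EFM. -/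
theorem epsEFM_preserved_by_cake_adding {N G : Type*} [Fintype N] [DecidableEq N]
    [DecidableEq G]
    (εh ε' : ℝ) (hεh : 0 ≤ εh) (hε' : 0 ≤ ε')
    (v : N → G → ℝ) (w : N → Set ℝ → ℝ)
    (hadd : ∀ i X Y, Disjoint X Y → w i (X ∪ Y) = w i X + w i Y)
    (hwnn : ∀ i X, 0 ≤ w i X)
    (hmono : ∀ i (X Y : Set ℝ), X ⊆ Y → w i X ≤ w i Y)
    (Mf : N → Finset G) (Cf : N → Set ℝ)
    (hEFM : EpsEFM εh v w Mf Cf)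
    (S : Finset N) (hS : S.Nonempty)
    -- S is an addable set of the ε̂-envy graph: no ε̂-envy edge within S, and no
    -- ε̂-envy or ε̂-equality edge from outside S into S (strict preference)
    (hin : ∀ i ∈ S, ∀ j ∈ S,
      util v w i (Mf i) (Cf i) ≥ util v w i (Mf j) (Cf j) - εh)
    (hout : ∀ i ∉ S, ∀ j ∈ S,
      util v w i (Mf i) (Cf i) > util v w i (Mf j) (Cf j))
    (C' : Set ℝ) (P : N → Set ℝ)
    (hPsub : ∀ j ∈ S, P j ⊆ C')
    (hPpair : ∀ j ∈ S, ∀ k ∈ S, j ≠ k → Disjoint (P j) (P k))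
    (hdisj : ∀ j ∈ S, Disjoint (Cf j) (P j))
    -- the pieces form an ε'-EF division of C' among S
    (hEFdiv : ∀ j ∈ S, ∀ k ∈ S, w j (P j) ≥ w j (P k) - ε')
    -- u_i(C') ≤ ε̂ for every i ∉ S
    (hCbound : ∀ i ∉ S, w i C' ≤ εh) :
    EpsEFM (εh + ε') v w Mf (fun j => if j ∈ S then Cf j ∪ P j else Cf j) := by
  intro i j
  have hge : util v w i (Mf i) (Cf i) ≤
      util v w i (Mf i) (if i ∈ S then Cf i ∪ P i else Cf i) := by
    unfold util
    split
    · exact add_le_add le_rfl (hmono i _ _ Set.subset_union_left)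
    · exact le_rfl
  constructor
  · intro hj
    simp only at hj
    have hCj : Cf j = ∅ := by
      by_cases hjS : j ∈ S
      · have := hj; rw [if_pos hjS] at this
        exact (Set.union_empty_iff.mp this).1
      · rwa [if_neg hjS] at hj
    have hCfj : (if j ∈ S then Cf j ∪ P j else Cf j) = Cf j := by
      split
      · rw [if_pos ‹j ∈ S›] at hj; rw [hCj] at hj ⊢; exact hj
      · rfl
    rcases (hEFM i j).1 hCj with h | ⟨g, hg, hgle⟩
    · exact Or.inl h
    · refine Or.inr ⟨g, hg, ?_⟩
      simp only [hCfj]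
      exact le_trans hgle hge
  · intro hj
    simp only at hj ⊢
    by_cases hjS : j ∈ S
    · rw [if_pos hjS] at hj ⊢
      have hwj : w i (Cf j ∪ P j) = w i (Cf j) + w i (P j) :=
        hadd i _ _ (hdisj j hjS)
      by_cases hiS : i ∈ S
      · rw [if_pos hiS]
        have hwi : w i (Cf i ∪ P i) = w i (Cf i) + w i (P i) :=
          hadd i _ _ (hdisj i hiS)
        have h1 := hin i hiS j hjS
        have h2 := hEFdiv i hiS j hjS
        unfold util at h1 ⊢
        rw [hwi, hwj]
        linarith
      · rw [if_neg hiS]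
        have h1 := hout i hiS j hjS
        have h2 : w i (P j) ≤ εh :=
          le_trans (hmono i _ _ (hPsub j hjS)) (hCbound i hiS)
        unfold util at h1 ⊢
        rw [hwj]
        linarith
    · rw [if_neg hjS] at hj ⊢
      have h1 := (hEFM i j).2 hj
      have := le_trans h1 hge
      linarith
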